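/- Let $\nu \geq 0$ and let $\beta_2 = \cosh^{-1}\left(\frac{t^2 - r_1^2 - r_2^2}{2 r_1 r_2}\right)$ for $t > r_1 + r_2 > 0$. Then for any $\epsilon > 0$, $\int_{\beta_2}^{\infty} \left[r_1^2 + r_2^2 + 2 r_1 r_2 \cosh s - t^2\right]^{-1/2} e^{-s\nu}\, ds$ is finite, and as $t \to \infty$ (with $r_1, r_2$ in a fixed compact subset of $(0,\infty)$) it is bounded by $C_\epsilon\, t^{-2\nu + \epsilon}$ for some constant $C_\epsilon$ depending on $\epsilon$ and the compact set. -/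

import Mathlib

open MeasureTheory Set

/-- The inverse hyperbolic cosine, `arcosh x = log (x + √(x² - 1))`. -/
noncomputable def Real.arcosh' (x : ℝ) : ℝ := Real.log (x + Real.sqrt (x ^ 2 - 1))

namespace TB

lemma cosh_sub_cosh (a b : ℝ) :
    Real.cosh a - Real.cosh b = 2 * Real.sinh ((a + b) / 2) * Real.sinh ((a - b) / 2) := by
  have h1 : a = (a + b) / 2 + (a - b) / 2 := by ring
  have h2 : b = (a + b) / 2 - (a - b) / 2 := by ring
  calc Real.cosh a - Real.cosh b
      = Real.cosh ((a + b) / 2 + (a - b) / 2) - Real.cosh ((a + b) / 2 - (a - b) / 2) := by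
        rw [← h1, ← h2]
    _ = _ := by rw [Real.cosh_add, Real.cosh_sub]; ring

lemma self_le_sinh {u : ℝ} (hu : 0 ≤ u) : u ≤ Real.sinh u := by
  rcases eq_or_lt_of_le hu with h | h
  · simp [← h]
  · exact (Real.self_lt_sinh_iff.mpr h).le

lemma near_bound {β s : ℝ} (hβ : 0 ≤ β) (hs : β ≤ s) :
    Real.sinh β * (s - β) ≤ Real.cosh s - Real.cosh β := by
  rw [cosh_sub_cosh]
  have h1 : Real.sinh β ≤ Real.sinh ((s + β) / 2) := Real.sinh_le_sinh.mpr (by linarith)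
  have h2 : (s - β) / 2 ≤ Real.sinh ((s - β) / 2) := self_le_sinh (by linarith)
  have h3 : 0 ≤ Real.sinh β := Real.sinh_nonneg_iff.mpr hβ
  nlinarith

lemma far_bound {β s : ℝ} (hβ : 0 ≤ β) (hs : β + 1 ≤ s) :
    Real.exp (s / 2) / 4 ≤ Real.cosh s - Real.cosh β := by
  rw [cosh_sub_cosh]
  have h1 : Real.sinh (s / 2) ≤ Real.sinh ((s + β) / 2) := Real.sinh_le_sinh.mpr (by linarith)
  have h2 : Real.sinh (1 / 2) ≤ Real.sinh ((s - β) / 2) := Real.sinh_le_sinh.mpr (by linarith)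
  have h3 : (1 / 2 : ℝ) < Real.sinh (1 / 2) := Real.self_lt_sinh_iff.mpr (by norm_num)
  have h4 : Real.exp (s / 2) / 4 ≤ Real.sinh (s / 2) := by
    rw [Real.sinh_eq, Real.exp_neg]
    have hE : (3 / 2 : ℝ) ≤ Real.exp (s / 2) := by
      have := Real.add_one_le_exp (s / 2); linarith
    have hEpos : 0 < Real.exp (s / 2) := Real.exp_pos _
    have hinv : Real.exp (s / 2) * (Real.exp (s / 2))⁻¹ = 1 := mul_inv_cancel₀ hEpos.ne'
    nlinarith [inv_nonneg.mpr hEpos.le]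
  have h5 : 0 ≤ Real.exp (s / 2) / 4 := by positivity
  nlinarith

lemma sqrt_pos' {x : ℝ} (hx : 1 < x) : 0 < Real.sqrt (x ^ 2 - 1) :=
  Real.sqrt_pos.mpr (by nlinarith)

lemma sq_sqrt' {x : ℝ} (hx : 1 < x) : Real.sqrt (x ^ 2 - 1) ^ 2 = x ^ 2 - 1 :=
  Real.sq_sqrt (by nlinarith)

lemma exp_arcosh {x : ℝ} (hx : 1 < x) : Real.exp (Real.arcosh' x) = x + Real.sqrt (x ^ 2 - 1) :=
  Real.exp_log (by have := sqrt_pos' hx; linarith)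

lemma arcosh_pos {x : ℝ} (hx : 1 < x) : 0 < Real.arcosh' x :=
  Real.log_pos (by have := sqrt_pos' hx; linarith)

lemma inv_exp_arcosh {x : ℝ} (hx : 1 < x) : (Real.exp (Real.arcosh' x))⁻¹ = x - Real.sqrt (x ^ 2 - 1) := by
  rw [exp_arcosh hx]
  have h := sq_sqrt' hx
  have : (x + Real.sqrt (x ^ 2 - 1)) * (x - Real.sqrt (x ^ 2 - 1)) = 1 := by nlinarith
  field_simp
  nlinarith [this]

lemma cosh_arcosh {x : ℝ} (hx : 1 < x) : Real.cosh (Real.arcosh' x) = x := by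
  rw [Real.cosh_eq, Real.exp_neg, inv_exp_arcosh hx, exp_arcosh hx]; ring

lemma sinh_arcosh {x : ℝ} (hx : 1 < x) : Real.sinh (Real.arcosh' x) = Real.sqrt (x ^ 2 - 1) := by
  rw [Real.sinh_eq, Real.exp_neg, inv_exp_arcosh hx, exp_arcosh hx]; ring

set_option maxHeartbeats 1000000 in
lemma core (ν a x : ℝ) (hν : 0 ≤ ν) (ha : 0 < a) (hx : 1 < x) :
    IntegrableOn (fun s : ℝ => (a * (Real.cosh s - x)) ^ (-(1 / 2) : ℝ) * Real.exp (-s * ν))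
      (Ioi (Real.arcosh' x)) ∧
    (1 ≤ Real.sqrt (x ^ 2 - 1) →
      ∫ s in Ioi (Real.arcosh' x),
          (a * (Real.cosh s - x)) ^ (-(1 / 2) : ℝ) * Real.exp (-s * ν)
        ≤ 10 * a ^ (-(1 / 2) : ℝ) * x ^ (-ν)) := by
  set β := Real.arcosh' x with hβdef
  set σ := Real.sqrt (x ^ 2 - 1) with hσdef
  have hβ : 0 < β := arcosh_pos hx
  have hσ : 0 < σ := sqrt_pos' hx
  have hcosh : Real.cosh β = x := cosh_arcosh hx
  have hsinh : Real.sinh β = σ := sinh_arcosh hx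
  set f : ℝ → ℝ := fun s => (a * (Real.cosh s - x)) ^ (-(1 / 2) : ℝ) * Real.exp (-s * ν)
    with hfdef
  -- measurability
  have hmeas : Measurable f := by
    apply Measurable.mul
    · exact ((Real.continuous_cosh.measurable.sub measurable_const).const_mul a).pow
        measurable_const
    · exact Real.measurable_exp.comp (measurable_id.neg.mul measurable_const)
  -- base positivity and pointwise bound on (β, β+1]
  have hbase : ∀ s : ℝ, β < s → σ * (s - β) ≤ Real.cosh s - x := by
    intro s hs
    have h := near_bound hβ.le hs.le
    rwa [hcosh, hsinh] at h
  have hexp_le : ∀ s : ℝ, β ≤ s → Real.exp (-s * ν) ≤ Real.exp (-β * ν) := by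
    intro s hs
    apply Real.exp_le_exp.mpr
    have : β * ν ≤ s * ν := mul_le_mul_of_nonneg_right hs hν
    linarith
  have hpt1 : ∀ s ∈ Ioc β (β + 1),
      f s ≤ (a * σ) ^ (-(1 / 2) : ℝ) * Real.exp (-β * ν) * (s - β) ^ (-(1 / 2) : ℝ) := by
    intro s hsmem
    obtain ⟨hs1, _⟩ := hsmem
    have hlow := hbase s hs1
    have hd : 0 < s - β := by linarith
    have hbpos : 0 < a * (σ * (s - β)) := by positivity
    have h1 : (a * (Real.cosh s - x)) ^ (-(1 / 2) : ℝ)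
        ≤ (a * (σ * (s - β))) ^ (-(1 / 2) : ℝ) :=
      Real.rpow_le_rpow_of_nonpos hbpos (by nlinarith) (by norm_num)
    have h2 : (a * (σ * (s - β))) ^ (-(1 / 2) : ℝ)
        = (a * σ) ^ (-(1 / 2) : ℝ) * (s - β) ^ (-(1 / 2) : ℝ) := by
      rw [← mul_assoc, Real.mul_rpow (by positivity) hd.le]
    calc f s ≤ (a * σ) ^ (-(1 / 2) : ℝ) * (s - β) ^ (-(1 / 2) : ℝ) * Real.exp (-β * ν) := by
          apply mul_le_mul (h2 ▸ h1) (hexp_le s hs1.le) (Real.exp_pos _).le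
          positivity
      _ = _ := by ring
  -- pointwise bound on (β+1, ∞)
  have hpt2 : ∀ s ∈ Ioi (β + 1),
      f s ≤ 2 * a ^ (-(1 / 2) : ℝ) * Real.exp (-β * ν) * Real.exp (-(1 / 4) * s) := by
    intro s hsmem
    have hs1 : β + 1 ≤ s := le_of_lt hsmem
    have hlow : Real.exp (s / 2) / 4 ≤ Real.cosh s - x := by
      have h := far_bound hβ.le hs1
      rwa [hcosh] at h
    have hbpos : 0 < a * (Real.exp (s / 2) / 4) := by positivity
    have h1 : (a * (Real.cosh s - x)) ^ (-(1 / 2) : ℝ)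
        ≤ (a * (Real.exp (s / 2) / 4)) ^ (-(1 / 2) : ℝ) :=
      Real.rpow_le_rpow_of_nonpos hbpos (by nlinarith) (by norm_num)
    have h4 : (4 : ℝ) ^ (-(1 / 2) : ℝ) = 1 / 2 := by
      rw [show (4 : ℝ) = 2 ^ (2 : ℕ) by norm_num, ← Real.rpow_natCast 2 2,
        ← Real.rpow_mul (by norm_num)]
      norm_num
    have h2 : (a * (Real.exp (s / 2) / 4)) ^ (-(1 / 2) : ℝ)
        = a ^ (-(1 / 2) : ℝ) * (2 * Real.exp (-(1 / 4) * s)) := by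
      rw [Real.mul_rpow ha.le (by positivity),
        Real.div_rpow (Real.exp_pos _).le (by norm_num : (0:ℝ) ≤ 4), ← Real.exp_mul, h4,
        show s / 2 * (-(1 / 2) : ℝ) = -(1 / 4) * s by ring]
      ring
    calc f s ≤ a ^ (-(1 / 2) : ℝ) * (2 * Real.exp (-(1 / 4) * s)) * Real.exp (-β * ν) := by
          apply mul_le_mul (h2 ▸ h1) (hexp_le s (by linarith)) (Real.exp_pos _).le
          positivity
      _ = _ := by ring
  -- integrability on the near piece
  have hint_rpow : IntegrableOn (fun s : ℝ => (s - β) ^ (-(1 / 2) : ℝ)) (Ioc β (β + 1)) := by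
    have h := intervalIntegral.intervalIntegrable_rpow' (a := 0) (b := 1)
      (r := (-(1 / 2) : ℝ)) (by norm_num)
    have h2 := h.comp_sub_right β
    rw [zero_add, add_comm 1 β] at h2
    exact (intervalIntegrable_iff_integrableOn_Ioc_of_le (by linarith)).mp h2
  have hg1int : IntegrableOn
      (fun s : ℝ => (a * σ) ^ (-(1 / 2) : ℝ) * Real.exp (-β * ν) * (s - β) ^ (-(1 / 2) : ℝ))
      (Ioc β (β + 1)) := hint_rpow.const_mul _
  have hfpos : ∀ s : ℝ, β < s → 0 ≤ f s := by
    intro s hs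
    have h1 := hbase s hs
    have h2 : 0 < Real.cosh s - x := lt_of_lt_of_le (mul_pos hσ (by linarith)) h1
    have hb0 : 0 ≤ a * (Real.cosh s - x) := by positivity
    exact mul_nonneg (Real.rpow_nonneg hb0 _) (Real.exp_pos _).le
  have hint1 : IntegrableOn f (Ioc β (β + 1)) := by
    refine Integrable.mono hg1int hmeas.aestronglyMeasurable.restrict
      ((ae_restrict_iff' measurableSet_Ioc).mpr (ae_of_all _ ?_))
    intro s hsmem
    rw [Real.norm_of_nonneg (hfpos s hsmem.1), Real.norm_of_nonneg (by
      have : (0:ℝ) ≤ s - β := by linarith [hsmem.1]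
      positivity)]
    exact hpt1 s hsmem
  -- integrability on the far piece
  have hg2int : IntegrableOn
      (fun s : ℝ => 2 * a ^ (-(1 / 2) : ℝ) * Real.exp (-β * ν) * Real.exp (-(1 / 4) * s))
      (Ioi (β + 1)) := by
    have h := exp_neg_integrableOn_Ioi (β + 1) (by norm_num : (0:ℝ) < 1/4)
    simpa [neg_mul, IntegrableOn] using h.const_mul (2 * a ^ (-(1 / 2) : ℝ) * Real.exp (-β * ν))
  have hint2 : IntegrableOn f (Ioi (β + 1)) := by
    refine Integrable.mono hg2int hmeas.aestronglyMeasurable.restrict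
      ((ae_restrict_iff' measurableSet_Ioi).mpr (ae_of_all _ ?_))
    intro s hsmem
    rw [Real.norm_of_nonneg (hfpos s (by linarith [mem_Ioi.mp hsmem])),
      Real.norm_of_nonneg (by positivity)]
    exact hpt2 s hsmem
  have hunion : Ioc β (β + 1) ∪ Ioi (β + 1) = Ioi β := Ioc_union_Ioi_eq_Ioi (by linarith)
  constructor
  · rw [← hunion]
    exact (integrableOn_union).mpr ⟨hint1, hint2⟩
  -- the integral bound
  intro hσ1
  have hxpos : (0:ℝ) < x := by linarith
  have hXpos : 0 < x ^ (-ν) := Real.rpow_pos_of_pos hxpos _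
  have hApos : 0 < a ^ (-(1 / 2) : ℝ) := Real.rpow_pos_of_pos ha _
  have hE_le : Real.exp (-β * ν) ≤ x ^ (-ν) := by
    have hexpβ : x ≤ Real.exp β := by
      rw [hβdef, exp_arcosh hx, ← hσdef]; linarith
    have h1 : Real.exp (-β * ν) = Real.exp β ^ (-ν) := by
      rw [← Real.exp_mul]; ring_nf
    rw [h1]
    exact Real.rpow_le_rpow_of_nonpos hxpos hexpβ (neg_nonpos.mpr hν)
  have hAσ : (a * σ) ^ (-(1 / 2) : ℝ) ≤ a ^ (-(1 / 2) : ℝ) :=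
    Real.rpow_le_rpow_of_nonpos ha (by nlinarith) (by norm_num)
  have hsplit : ∫ s in Ioi β, f s = (∫ s in Ioc β (β + 1), f s) + ∫ s in Ioi (β + 1), f s := by
    rw [← hunion]
    exact setIntegral_union Ioc_disjoint_Ioi_same measurableSet_Ioi hint1 hint2
  have hval1 : ∫ s in Ioc β (β + 1), (s - β) ^ (-(1 / 2) : ℝ) = 2 := by
    rw [← intervalIntegral.integral_of_le (by linarith : β ≤ β + 1),
      intervalIntegral.integral_comp_sub_right (fun u : ℝ => u ^ (-(1 / 2) : ℝ)) β,
      show β - β = (0:ℝ) by ring, show β + 1 - β = (1:ℝ) by ring,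
      integral_rpow (Or.inl (by norm_num))]
    norm_num
  have hbound1 : ∫ s in Ioc β (β + 1), f s ≤ 2 * (a ^ (-(1 / 2) : ℝ) * x ^ (-ν)) := by
    have h := setIntegral_mono_on hint1 hg1int measurableSet_Ioc hpt1
    rw [MeasureTheory.integral_const_mul, hval1] at h
    refine h.trans ?_
    have := mul_le_mul hAσ hE_le (Real.exp_pos _).le hApos.le
    nlinarith
  have hval2 : ∫ s in Ioi (β + 1), Real.exp (-(1 / 4) * s) = 4 * Real.exp (-(1 / 4) * (β + 1)) := by
    have h := integral_comp_mul_left_Ioi (fun u : ℝ => Real.exp (-u)) (β + 1)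
      (by norm_num : (0:ℝ) < 1/4)
    simp only [neg_mul] at h ⊢
    rw [h, integral_exp_neg_Ioi]
    rw [smul_eq_mul]
    norm_num
  have hbound2 : ∫ s in Ioi (β + 1), f s ≤ 8 * (a ^ (-(1 / 2) : ℝ) * x ^ (-ν)) := by
    have h := setIntegral_mono_on hint2 hg2int measurableSet_Ioi hpt2
    rw [MeasureTheory.integral_const_mul, hval2] at h
    refine h.trans ?_
    have hexp1 : Real.exp (-(1 / 4) * (β + 1)) ≤ 1 :=
      Real.exp_le_one_iff.mpr (by nlinarith)
    have hE0 : 0 < Real.exp (-β * ν) := Real.exp_pos _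
    calc 2 * a ^ (-(1 / 2) : ℝ) * Real.exp (-β * ν) * (4 * Real.exp (-(1 / 4) * (β + 1)))
        ≤ 2 * a ^ (-(1 / 2) : ℝ) * Real.exp (-β * ν) * 4 := by
          apply mul_le_mul_of_nonneg_left (by linarith) (by positivity)
      _ = 8 * (a ^ (-(1 / 2) : ℝ) * Real.exp (-β * ν)) := by ring
      _ ≤ 8 * (a ^ (-(1 / 2) : ℝ) * x ^ (-ν)) := by
          nlinarith [mul_le_mul_of_nonneg_left hE_le hApos.le]
  rw [hsplit]
  nlinarith [hbound1, hbound2]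

end TB

set_option maxHeartbeats 1000000 in
/-- Local decay estimate for the third branch of the fundamental solution: with
`β₂ = arcosh((t² - r₁² - r₂²)/(2 r₁ r₂))` for `t > r₁ + r₂`, the integral
`∫_{β₂}^∞ (r₁² + r₂² + 2 r₁ r₂ cosh s - t²)^{-1/2} e^{-sν} ds` is finite, and for
`r₁, r₂` in a fixed compact subset of `(0,∞)` and any `ε > 0` it is bounded by
`C_ε t^{-2ν+ε}` for large `t`. -/
theorem third_branch_local_decay (ν : ℝ) (hν : 0 ≤ ν)
    (K : Set ℝ) (hK : IsCompact K) (hKpos : K ⊆ Ioi 0) :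
    ∀ ε > (0 : ℝ), ∃ C T₀ : ℝ, ∀ r₁ ∈ K, ∀ r₂ ∈ K, ∀ t : ℝ, r₁ + r₂ < t →
      IntegrableOn
        (fun s : ℝ => (r₁ ^ 2 + r₂ ^ 2 + 2 * r₁ * r₂ * Real.cosh s - t ^ 2) ^ (-(1 / 2) : ℝ) *
          Real.exp (-s * ν))
        (Ioi (Real.arcosh' ((t ^ 2 - r₁ ^ 2 - r₂ ^ 2) / (2 * r₁ * r₂)))) ∧
      (T₀ ≤ t →
        ∫ s in Ioi (Real.arcosh' ((t ^ 2 - r₁ ^ 2 - r₂ ^ 2) / (2 * r₁ * r₂))),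
            (r₁ ^ 2 + r₂ ^ 2 + 2 * r₁ * r₂ * Real.cosh s - t ^ 2) ^ (-(1 / 2) : ℝ) *
              Real.exp (-s * ν) ≤
          C * t ^ (-2 * ν + ε)) := by
  intro ε hε
  rcases K.eq_empty_or_nonempty with hKe | hKne
  · exact ⟨0, 0, by simp [hKe]⟩
  obtain ⟨m, hm_mem, hm_lb⟩ := hK.exists_isLeast hKne
  obtain ⟨M, hM_mem, hM_ub⟩ := hK.exists_isGreatest hKne
  have hm : 0 < m := hKpos hm_mem
  have hM : 0 < M := hKpos hM_mem
  refine ⟨10 * (2 * m ^ 2) ^ (-(1 / 2) : ℝ) * (4 * M ^ 2) ^ ν, 3 * M + 1, ?_⟩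
  intro r₁ hr₁ r₂ hr₂ t ht
  have h1m : m ≤ r₁ := hm_lb hr₁
  have h2m : m ≤ r₂ := hm_lb hr₂
  have h1M : r₁ ≤ M := hM_ub hr₁
  have h2M : r₂ ≤ M := hM_ub hr₂
  have h1p : 0 < r₁ := lt_of_lt_of_le hm h1m
  have h2p : 0 < r₂ := lt_of_lt_of_le hm h2m
  have htpos : 0 < t := by linarith
  have ha : 0 < 2 * r₁ * r₂ := by positivity
  have hx : 1 < (t ^ 2 - r₁ ^ 2 - r₂ ^ 2) / (2 * r₁ * r₂) := by
    rw [lt_div_iff₀ ha]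
    nlinarith
  have hfun : ∀ s : ℝ, r₁ ^ 2 + r₂ ^ 2 + 2 * r₁ * r₂ * Real.cosh s - t ^ 2
      = 2 * r₁ * r₂ * (Real.cosh s - (t ^ 2 - r₁ ^ 2 - r₂ ^ 2) / (2 * r₁ * r₂)) := by
    intro s
    field_simp
    ring
  have hcore := TB.core ν (2 * r₁ * r₂) ((t ^ 2 - r₁ ^ 2 - r₂ ^ 2) / (2 * r₁ * r₂)) hν ha hx
  simp only [hfun]
  refine ⟨hcore.1, ?_⟩
  intro hT
  -- large t facts
  have ht1 : (1 : ℝ) ≤ t := by linarith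
  have ht2M : 2 * M ≤ t := by linarith
  have hq1 : r₁ ^ 2 + r₂ ^ 2 ≤ 2 * M ^ 2 := by nlinarith
  have hq2 : 2 * r₁ * r₂ ≤ 2 * M ^ 2 := by nlinarith
  have hq3 : 4 * M ^ 2 ≤ t ^ 2 := by nlinarith
  have hq4 : 8 * M ^ 2 ≤ t ^ 2 := by nlinarith
  have hx2 : t ^ 2 / (4 * M ^ 2) ≤ (t ^ 2 - r₁ ^ 2 - r₂ ^ 2) / (2 * r₁ * r₂) := by
    rw [div_le_div_iff₀ (by positivity) ha]
    nlinarith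
  have hx4 : (2 : ℝ) ≤ (t ^ 2 - r₁ ^ 2 - r₂ ^ 2) / (2 * r₁ * r₂) := by
    refine le_trans ?_ hx2
    rw [le_div_iff₀ (by positivity)]
    nlinarith
  have hσ1 : 1 ≤ Real.sqrt (((t ^ 2 - r₁ ^ 2 - r₂ ^ 2) / (2 * r₁ * r₂)) ^ 2 - 1) := by
    refine (Real.le_sqrt (by norm_num) (by nlinarith)).mpr (by nlinarith)
  have hbound := hcore.2 hσ1
  refine hbound.trans ?_
  -- now the arithmetic chain
  have hA : (2 * r₁ * r₂) ^ (-(1 / 2) : ℝ) ≤ (2 * m ^ 2) ^ (-(1 / 2) : ℝ) :=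
    Real.rpow_le_rpow_of_nonpos (by positivity) (by nlinarith) (by norm_num)
  have hstep2 : ((t ^ 2 - r₁ ^ 2 - r₂ ^ 2) / (2 * r₁ * r₂)) ^ (-ν)
      ≤ (t ^ 2 / (4 * M ^ 2)) ^ (-ν) :=
    Real.rpow_le_rpow_of_nonpos (by positivity) hx2 (neg_nonpos.mpr hν)
  have hstep3 : (t ^ 2 / (4 * M ^ 2)) ^ (-ν) = (4 * M ^ 2) ^ ν * t ^ (-2 * ν) := by
    rw [Real.div_rpow (by positivity) (by positivity),
      Real.rpow_neg (by positivity : (0:ℝ) ≤ 4 * M ^ 2), div_inv_eq_mul]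
    have h4 : ((t : ℝ) ^ 2) ^ (-ν) = t ^ (-2 * ν) := by
      rw [← Real.rpow_natCast t 2, ← Real.rpow_mul htpos.le]
      congr 1
      push_cast
      ring
    rw [h4]
    ring
  have hstep5 : t ^ (-2 * ν) ≤ t ^ (-2 * ν + ε) :=
    Real.rpow_le_rpow_of_exponent_le ht1 (by linarith)
  have hX : ((t ^ 2 - r₁ ^ 2 - r₂ ^ 2) / (2 * r₁ * r₂)) ^ (-ν)
      ≤ (4 * M ^ 2) ^ ν * t ^ (-2 * ν + ε) := by
    refine hstep2.trans ?_
    rw [hstep3]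
    exact mul_le_mul_of_nonneg_left hstep5 (by positivity)
  have hXpos : 0 ≤ ((t ^ 2 - r₁ ^ 2 - r₂ ^ 2) / (2 * r₁ * r₂)) ^ (-ν) :=
    Real.rpow_nonneg (by positivity) _
  calc 10 * (2 * r₁ * r₂) ^ (-(1 / 2) : ℝ)
        * ((t ^ 2 - r₁ ^ 2 - r₂ ^ 2) / (2 * r₁ * r₂)) ^ (-ν)
      ≤ 10 * (2 * m ^ 2) ^ (-(1 / 2) : ℝ) * ((4 * M ^ 2) ^ ν * t ^ (-2 * ν + ε)) := by
        apply mul_le_mul (by nlinarith) hX hXpos (by positivity)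
    _ = 10 * (2 * m ^ 2) ^ (-(1 / 2) : ℝ) * (4 * M ^ 2) ^ ν * t ^ (-2 * ν + ε) := by ring
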